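/- Let A ∈ ℂ^{db×db} and v ∈ ℂ^{db×b}. Suppose A = U T U^{-1} where T = diag(Θ_1, …, Θ_d) is block diagonal with b×b blocks, and write W = U^{-1}v with block rows W_1, …, W_d ∈ ℂ^{b×b}, each invertible. Set S_i = W_i^{-1} Θ_i W_i. Then each S_i is a left solvent of any monic block characteristic polynomial P(z) of A with respect to v, i.e., P(S_i) = 0 for all i. -/
import Mathlib


open Polynomial Matrix

/-- The block action `P(A)∘v = Σ_i A^i v Γ_i` of a matrix polynomial on a block vector. -/
noncomputable def circ {N : Type*} [Fintype N] [DecidableEq N] {b : ℕ}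
    (A : Matrix N N ℂ) (P : Polynomial (Matrix (Fin b) (Fin b) ℂ))
    (w : Matrix N (Fin b) ℂ) : Matrix N (Fin b) ℂ :=
  P.sum fun i Γi => A ^ i * w * Γi

/-- Block (right-coefficient) evaluation `P(S) = Σ_i S^i Γ_i`. -/
noncomputable def blockEval {b : ℕ} (S : Matrix (Fin b) (Fin b) ℂ)
    (P : Polynomial (Matrix (Fin b) (Fin b) ℂ)) : Matrix (Fin b) (Fin b) ℂ :=
  P.sum fun i Γi => S ^ i * Γi

/-- The `i`-th `b×b` block row of a `db×b` block vector. -/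
def blockRowOf {d b : ℕ} (W : Matrix (Fin b × Fin d) (Fin b) ℂ) (i : Fin d) :
    Matrix (Fin b) (Fin b) ℂ :=
  Matrix.of fun s t => W (s, i) t

private lemma myConjPow {M : Type*} [Monoid M] (a c x : M) (h1 : c * a = 1) (h2 : a * c = 1)
    (k : ℕ) : (a * x * c) ^ k = a * x ^ k * c := by
  induction k with
  | zero => simpa using h2.symm
  | succ k ih =>
      rw [pow_succ, ih, pow_succ]
      calc a * x ^ k * c * (a * x * c) = a * x ^ k * (c * a) * x * c := by
            simp [mul_assoc]
        _ = a * (x ^ k * x) * c := by rw [h1]; simp [mul_assoc]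

private lemma blockRowOf_zero {d b : ℕ} (i : Fin d) :
    blockRowOf (0 : Matrix (Fin b × Fin d) (Fin b) ℂ) i = 0 := by
  ext s t; simp [blockRowOf]

private lemma blockRowOf_sum {d b : ℕ} {ι : Type*} (s : Finset ι)
    (f : ι → Matrix (Fin b × Fin d) (Fin b) ℂ) (i : Fin d) :
    blockRowOf (∑ x ∈ s, f x) i = ∑ x ∈ s, blockRowOf (f x) i := by
  ext u t; simp [blockRowOf, Matrix.sum_apply]

private lemma blockRowOf_mul_right {d b : ℕ}
    (M : Matrix (Fin b × Fin d) (Fin b) ℂ) (Γ : Matrix (Fin b) (Fin b) ℂ) (i : Fin d) :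
    blockRowOf (M * Γ) i = blockRowOf M i * Γ := by
  ext s t; simp [blockRowOf, Matrix.mul_apply]

private lemma blockRowOf_blockDiagonal_mul {d b : ℕ}
    (Θ : Fin d → Matrix (Fin b) (Fin b) ℂ) (W : Matrix (Fin b × Fin d) (Fin b) ℂ)
    (i : Fin d) :
    blockRowOf (Matrix.blockDiagonal Θ * W) i = Θ i * blockRowOf W i := by
  ext s t
  simp only [blockRowOf, Matrix.of_apply, Matrix.mul_apply, Matrix.blockDiagonal_apply]
  rw [Fintype.sum_prod_type_right]
  rw [Finset.sum_eq_single i]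
  · simp
  · intro j _ hj
    simp [Ne.symm hj]
  · simp

private lemma blockRowOf_blockDiagonal_pow_mul {d b : ℕ}
    (Θ : Fin d → Matrix (Fin b) (Fin b) ℂ) (W : Matrix (Fin b × Fin d) (Fin b) ℂ)
    (i : Fin d) (k : ℕ) :
    blockRowOf (Matrix.blockDiagonal Θ ^ k * W) i = Θ i ^ k * blockRowOf W i := by
  induction k with
  | zero => simp
  | succ k ih =>
      rw [pow_succ', Matrix.mul_assoc, blockRowOf_blockDiagonal_mul, ih, pow_succ', Matrix.mul_assoc]

/-- If `A = U·diag(Θ_1,…,Θ_d)·U⁻¹` and the block rows `W_i` of `W = U⁻¹v` are invertible,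
then each `S_i = W_i⁻¹ Θ_i W_i` is a left solvent of any monic block characteristic
polynomial of `A` with respect to `v`. -/
theorem solvent_of_blockCharPoly {d b : ℕ}
    (A U : Matrix (Fin b × Fin d) (Fin b × Fin d) ℂ) (hU : IsUnit U.det)
    (Θ : Fin d → Matrix (Fin b) (Fin b) ℂ)
    (hA : A = U * Matrix.blockDiagonal Θ * U⁻¹)
    (v : Matrix (Fin b × Fin d) (Fin b) ℂ)
    (hW : ∀ i, IsUnit (blockRowOf (U⁻¹ * v) i))
    (S : Fin d → Matrix (Fin b) (Fin b) ℂ)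
    (hS : ∀ i, S i = (blockRowOf (U⁻¹ * v) i)⁻¹ * Θ i * blockRowOf (U⁻¹ * v) i)
    (P : Polynomial (Matrix (Fin b) (Fin b) ℂ))
    (hmonic : P.Monic) (hdeg : P.natDegree = d) (hchar : circ A P v = 0) :
    ∀ i, blockEval (S i) P = 0 := by
  set W : Matrix (Fin b × Fin d) (Fin b) ℂ := U⁻¹ * v with hWdef
  have hUU : U⁻¹ * U = 1 := Matrix.nonsing_inv_mul U hU
  have hUU' : U * U⁻¹ = 1 := Matrix.mul_nonsing_inv U hU
  set T := Matrix.blockDiagonal Θ with hTdef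
  -- circ A P v = U * circ T P W
  have hcirc : circ A P v = U * circ T P W := by
    unfold circ
    rw [Polynomial.sum_def, Polynomial.sum_def, Matrix.mul_sum]
    refine Finset.sum_congr rfl fun k _ => ?_
    rw [hA, myConjPow U U⁻¹ T hUU hUU']
    calc U * T ^ k * U⁻¹ * v * P.coeff k = U * (T ^ k * (U⁻¹ * v) * P.coeff k) := by
          simp [Matrix.mul_assoc]
      _ = U * (T ^ k * W * P.coeff k) := by rw [hWdef]
  have hTW : circ T P W = 0 := by
    have h1 : U * circ T P W = 0 := by rw [← hcirc, hchar]
    calc circ T P W = (U⁻¹ * U) * circ T P W := by rw [hUU, Matrix.one_mul]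
      _ = U⁻¹ * (U * circ T P W) := by rw [Matrix.mul_assoc]
      _ = 0 := by rw [h1, Matrix.mul_zero]
  intro i
  have hWi : IsUnit (blockRowOf W i) := hW i
  have hWid : IsUnit (blockRowOf W i).det := (Matrix.isUnit_iff_isUnit_det _).mp hWi
  have hinv1 : (blockRowOf W i)⁻¹ * blockRowOf W i = 1 := Matrix.nonsing_inv_mul _ hWid
  have hinv2 : blockRowOf W i * (blockRowOf W i)⁻¹ = 1 := Matrix.mul_nonsing_inv _ hWid
  -- block row of circ T P W
  have hrow : blockRowOf (circ T P W) i = 0 := by rw [hTW]; exact blockRowOf_zero i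
  have hrow' : blockRowOf (circ T P W) i
      = ∑ k ∈ P.support, Θ i ^ k * blockRowOf W i * P.coeff k := by
    unfold circ
    rw [Polynomial.sum_def, blockRowOf_sum]
    refine Finset.sum_congr rfl fun k _ => ?_
    rw [blockRowOf_mul_right, blockRowOf_blockDiagonal_pow_mul]
  have hEval : blockEval (S i) P
      = (blockRowOf W i)⁻¹ * ∑ k ∈ P.support, Θ i ^ k * blockRowOf W i * P.coeff k := by
    unfold blockEval
    rw [Polynomial.sum_def, Matrix.mul_sum]
    refine Finset.sum_congr rfl fun k _ => ?_
    rw [hS i, myConjPow _ _ _ hinv2 hinv1]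
    simp [Matrix.mul_assoc]
  rw [hEval, ← hrow', hrow, Matrix.mul_zero]
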